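/- Let m, n be positive integers and let A, B ∈ SL(2,ℂ) satisfy A^m = B^n, with the pair (A, B) irreducible (no nonzero common eigenvector). Then there exist λ, μ ∈ ℂ with λ^{2m} = 1, λ² ≠ 1, μ² ≠ 1, λ^m = μ^n, a number r ∈ ℂ with r ≠ 0 and r ≠ 1, and a matrix P ∈ SL(2,ℂ), such that A = P D_λ P⁻¹ and B = P (Q_r D_μ Q_r⁻¹) P⁻¹, where D_λ denotes the diagonal matrix with entries λ, λ⁻¹, D_μ the diagonal matrix with entries μ, μ⁻¹, and Q_r the matrix with rows (1, r-1) and (1, r). -/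

import Mathlib

open Matrix

/-- A pair `(A, B)` of `2 × 2` complex matrices is reducible if there is a nonzero
common eigenvector. -/
def IsReduciblePair (A B : Matrix (Fin 2) (Fin 2) ℂ) : Prop :=
  ∃ v : Fin 2 → ℂ, v ≠ 0 ∧ (∃ a : ℂ, A.mulVec v = a • v) ∧ (∃ b : ℂ, B.mulVec v = b • v)

/-- The diagonal matrix `diag(λ, λ⁻¹)`. -/
noncomputable def Dmat (l : ℂ) : Matrix (Fin 2) (Fin 2) ℂ := !![l, 0; 0, l⁻¹]

/-- The matrix with rows `(1, r-1)` and `(1, r)`. -/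
def Qmat (r : ℂ) : Matrix (Fin 2) (Fin 2) ℂ := !![1, r - 1; 1, r]

lemma exists_eig (M : Matrix (Fin 2) (Fin 2) ℂ) :
    ∃ (a : ℂ) (v : Fin 2 → ℂ), v ≠ 0 ∧ M.mulVec v = a • v := by
  obtain ⟨c, hc⟩ := Module.End.exists_eigenvalue (Matrix.toLin' M)
  obtain ⟨v, hv⟩ := hc.exists_hasEigenvector
  refine ⟨c, v, hv.2, ?_⟩
  have := hv.apply_eq_smul
  simpa [Matrix.toLin'_apply] using this

lemma det_eig (M : Matrix (Fin 2) (Fin 2) ℂ) (a : ℂ) (v : Fin 2 → ℂ) (hv : v ≠ 0)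
    (h : M.mulVec v = a • v) : (M - a • 1).det = 0 := by
  rw [← Matrix.exists_mulVec_eq_zero_iff]
  refine ⟨v, hv, ?_⟩
  rw [Matrix.sub_mulVec, h, Matrix.smul_mulVec, Matrix.one_mulVec, sub_self]

lemma eig_of_det (M : Matrix (Fin 2) (Fin 2) ℂ) (a : ℂ) (h : (M - a • 1).det = 0) :
    ∃ v : Fin 2 → ℂ, v ≠ 0 ∧ M.mulVec v = a • v := by
  obtain ⟨v, hv, h0⟩ := (Matrix.exists_mulVec_eq_zero_iff).2 h
  refine ⟨v, hv, ?_⟩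
  rw [Matrix.sub_mulVec, Matrix.smul_mulVec, Matrix.one_mulVec, sub_eq_zero] at h0
  exact h0



lemma line1 (a b x y : ℂ) (hab : ¬ (a = 0 ∧ b = 0)) (h : a * x + b * y = 0) :
    ∃ t : ℂ, x = t * b ∧ y = t * (-a) := by
  by_cases ha : a = 0
  · have hb : b ≠ 0 := fun hb => hab ⟨ha, hb⟩
    have hy : y = 0 := by
      have hby : b * y = 0 := by linear_combination h - x * ha
      rcases mul_eq_zero.1 hby with h' | h'
      · exact absurd h' hb
      · exact h'
    exact ⟨x / b, by field_simp, by simp [hy, ha]⟩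
  · refine ⟨-(y / a), ?_, by field_simp⟩
    have : x = -(y * b) / a := by
      rw [eq_div_iff ha]; linear_combination h
    rw [this]; ring

lemma kernel_line (M : Matrix (Fin 2) (Fin 2) ℂ) (hM : M ≠ 0) (v w : Fin 2 → ℂ)
    (hv : v ≠ 0) (h1 : M.mulVec v = 0) (h2 : M.mulVec w = 0) : ∃ t : ℂ, w = t • v := by
  have e1 : M 0 0 * v 0 + M 0 1 * v 1 = 0 := by
    have := congrFun h1 0; simpa [Matrix.mulVec, dotProduct, Fin.sum_univ_two] using this
  have e2 : M 1 0 * v 0 + M 1 1 * v 1 = 0 := by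
    have := congrFun h1 1; simpa [Matrix.mulVec, dotProduct, Fin.sum_univ_two] using this
  have f1 : M 0 0 * w 0 + M 0 1 * w 1 = 0 := by
    have := congrFun h2 0; simpa [Matrix.mulVec, dotProduct, Fin.sum_univ_two] using this
  have f2 : M 1 0 * w 0 + M 1 1 * w 1 = 0 := by
    have := congrFun h2 1; simpa [Matrix.mulVec, dotProduct, Fin.sum_univ_two] using this
  have key : ∀ a b : ℂ, ¬ (a = 0 ∧ b = 0) → a * v 0 + b * v 1 = 0 → a * w 0 + b * w 1 = 0 →
      ∃ t : ℂ, w = t • v := by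
    intro a b hab hva hwa
    obtain ⟨s, hs1, hs2⟩ := line1 a b (v 0) (v 1) hab hva
    obtain ⟨t, ht1, ht2⟩ := line1 a b (w 0) (w 1) hab hwa
    have hs : s ≠ 0 := by
      rintro rfl
      apply hv
      ext i; fin_cases i <;> simp_all
    refine ⟨t / s, ?_⟩
    ext i; fin_cases i
    · show w 0 = t / s * v 0
      rw [ht1, hs1]; field_simp
    · show w 1 = t / s * v 1
      rw [ht2, hs2]; field_simp
  by_cases h00 : ¬ (M 0 0 = 0 ∧ M 0 1 = 0)
  · exact key _ _ h00 e1 f1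
  · push_neg at h00
    refine key (M 1 0) (M 1 1) ?_ e2 f2
    rintro ⟨ha, hb⟩
    apply hM
    ext i j; fin_cases i <;> fin_cases j <;> simp_all [h00.1, h00.2]

lemma nilp_pow (N : Matrix (Fin 2) (Fin 2) ℂ) (hN : N * N = 0) (l : ℂ) (k : ℕ) :
    (l • (1 : Matrix (Fin 2) (Fin 2) ℂ) + N) ^ (k + 1)
      = l ^ (k + 1) • 1 + (((k : ℂ) + 1) * l ^ k) • N := by
  induction k with
  | zero => simp
  | succ k ih =>
    rw [pow_succ, ih]
    push_cast
    rw [add_mul, mul_add, mul_add]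
    simp only [smul_mul_assoc, mul_smul_comm, one_mul, mul_one, smul_smul, hN, smul_zero]
    rw [add_zero]
    module

lemma smul_cancel_vec (a b : ℂ) (v : Fin 2 → ℂ) (hv : v ≠ 0) (h : a • v = b • v) : a = b := by
  obtain ⟨i, hi⟩ := Function.ne_iff.1 hv
  have := congrFun h i
  simp only [Pi.smul_apply, smul_eq_mul, Pi.zero_apply] at this hi
  exact mul_right_cancel₀ hi this

lemma prop2 (v w : Fin 2 → ℂ) (hv : v ≠ 0) (h : v 0 * w 1 - v 1 * w 0 = 0) :
    ∃ t : ℂ, w = t • v := by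
  by_cases h0 : v 0 = 0
  · have h1 : v 1 ≠ 0 := by
      intro h1; apply hv; ext i; fin_cases i <;> simp_all
    refine ⟨w 1 / v 1, ?_⟩
    ext i; fin_cases i
    · show w 0 = w 1 / v 1 * v 0
      rw [h0, mul_zero]
      have : v 1 * w 0 = 0 := by linear_combination -h + w 1 * h0
      rcases mul_eq_zero.1 this with h' | h'
      · exact absurd h' h1
      · exact h'
    · show w 1 = w 1 / v 1 * v 1
      field_simp
  · refine ⟨w 0 / v 0, ?_⟩
    ext i; fin_cases i
    · show w 0 = w 0 / v 0 * v 0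
      field_simp
    · show w 1 = w 0 / v 0 * v 1
      rw [eq_comm, div_mul_eq_mul_div, div_eq_iff h0]
      linear_combination -h

lemma pow_mulVec (M : Matrix (Fin 2) (Fin 2) ℂ) (l : ℂ) (v : Fin 2 → ℂ)
    (h : M.mulVec v = l • v) (k : ℕ) : (M ^ k).mulVec v = l ^ k • v := by
  induction k with
  | zero => simp
  | succ k ih =>
    rw [pow_succ, ← Matrix.mulVec_mulVec, h, Matrix.mulVec_smul, ih, smul_smul, pow_succ]
    ring_nf

lemma CH2 (M : Matrix (Fin 2) (Fin 2) ℂ) :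
    M * M = (M 0 0 + M 1 1) • M - M.det • 1 := by
  ext i j
  rw [Matrix.det_fin_two]
  fin_cases i <;> fin_cases j <;>
    simp [Matrix.mul_apply, Fin.sum_univ_two, Matrix.one_apply] <;> ring

lemma eig_structure (M : Matrix (Fin 2) (Fin 2) ℂ) (hdet : M.det = 1) (c : ℂ) (hc : c ^ 2 = 1)
    (k : ℕ) (hk : 0 < k) (hMk : M ^ k = c • 1)
    (hns : ¬ ∃ a : ℂ, M = a • (1 : Matrix (Fin 2) (Fin 2) ℂ)) :
    ∃ (l : ℂ) (v w : Fin 2 → ℂ), l ≠ 0 ∧ l ^ k = c ∧ l ^ 2 ≠ 1 ∧ v ≠ 0 ∧ w ≠ 0 ∧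
      M.mulVec v = l • v ∧ M.mulVec w = l⁻¹ • w ∧ v 0 * w 1 - v 1 * w 0 ≠ 0 := by
  have hc0 : c ≠ 0 := by intro h; rw [h] at hc; simp at hc
  obtain ⟨l, v, hv, hev⟩ := exists_eig M
  have hlk : l ^ k = c := by
    have h1 : (M ^ k).mulVec v = l ^ k • v := pow_mulVec M l v hev k
    rw [hMk, Matrix.smul_mulVec, Matrix.one_mulVec] at h1
    exact (smul_cancel_vec c (l ^ k) v hv h1).symm
  have hl0 : l ≠ 0 := by
    intro h; rw [h, zero_pow hk.ne'] at hlk; exact hc0 hlk.symm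
  have hdet2 : M 0 0 * M 1 1 - M 0 1 * M 1 0 = 1 := by
    rw [← Matrix.det_fin_two]; exact hdet
  have hchar : l ^ 2 - (M 0 0 + M 1 1) * l + 1 = 0 := by
    have hd := det_eig M l v hv hev
    rw [Matrix.det_fin_two] at hd
    simp only [Matrix.sub_apply, Matrix.smul_apply, Matrix.one_apply, smul_eq_mul] at hd
    norm_num at hd
    linear_combination hd - hdet2
  have hl2 : l ^ 2 ≠ 1 := by
    intro hl2
    apply hns
    have hll : l * l = 1 := by linear_combination hl2
    have ht2 : M 0 0 + M 1 1 = 2 * l := by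
      have h5 : (M 0 0 + M 1 1) * l = (2 * l) * l := by linear_combination -hchar - hll
      exact mul_right_cancel₀ hl0 h5
    set N : Matrix (Fin 2) (Fin 2) ℂ := M - l • 1 with hN
    have hNsq : N * N = 0 := by
      have hch := CH2 M
      rw [hdet] at hch
      rw [hN, sub_mul, mul_sub, mul_sub, hch, ht2]
      have h11 : (l • (1 : Matrix (Fin 2) (Fin 2) ℂ)) * (l • 1) = 1 • 1 := by
        rw [smul_mul_assoc, mul_smul_comm, one_mul, smul_smul, hll, one_smul, one_smul]
      rw [h11]
      have h12 : M * (l • (1 : Matrix (Fin 2) (Fin 2) ℂ)) = l • M := by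
        rw [mul_smul_comm, mul_one]
      have h13 : (l • (1 : Matrix (Fin 2) (Fin 2) ℂ)) * M = l • M := by
        rw [smul_mul_assoc, one_mul]
      rw [h12, h13]
      module
    have hMN : M = l • 1 + N := by rw [hN]; module
    obtain ⟨k', rfl⟩ : ∃ k', k = k' + 1 := ⟨k - 1, (Nat.succ_pred_eq_of_pos hk).symm⟩
    have hexp := nilp_pow N hNsq l k'
    rw [← hMN, hMk, ← hlk] at hexp
    have h2 : (((k' : ℂ) + 1) * l ^ k') • N = 0 := (left_eq_add.mp hexp).symm ▸ rfl
    have hcoef : ((k' : ℂ) + 1) * l ^ k' ≠ 0 := by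
      apply mul_ne_zero
      · have h9 : ((k' + 1 : ℕ) : ℂ) ≠ 0 := Nat.cast_ne_zero.mpr (Nat.succ_ne_zero k')
        push_cast at h9; exact h9
      · exact pow_ne_zero _ hl0
    have hN0 : N = 0 := (smul_eq_zero.1 h2).resolve_left hcoef
    exact ⟨l, by rw [hMN, hN0, add_zero]⟩
  have hd2 : (M - l⁻¹ • 1).det = 0 := by
    rw [Matrix.det_fin_two]
    simp only [Matrix.sub_apply, Matrix.smul_apply, Matrix.one_apply, smul_eq_mul]
    norm_num
    have hli : l * l⁻¹ = 1 := mul_inv_cancel₀ hl0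
    linear_combination hdet2 + (l⁻¹ * l⁻¹) * hchar +
      ((M 0 0 + M 1 1) * l⁻¹ - l * l⁻¹ - 1) * hli
  obtain ⟨w, hw, hevw⟩ := eig_of_det M l⁻¹ hd2
  refine ⟨l, v, w, hl0, hlk, hl2, hv, hw, hev, hevw, ?_⟩
  intro hdep
  obtain ⟨s, rfl⟩ := prop2 v w hv hdep
  have hs : s ≠ 0 := by rintro rfl; simp at hw
  have h3 : M.mulVec (s • v) = (s * l) • v := by
    rw [Matrix.mulVec_smul, hev, smul_smul]
  rw [h3] at hevw
  have h4 : s * l = l⁻¹ * s := by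
    apply smul_cancel_vec _ _ v hv
    rw [hevw, smul_smul]
  have hli : l * l⁻¹ = 1 := mul_inv_cancel₀ hl0
  have h6 : s * (l * l) = s * 1 := by linear_combination l * h4 + s * hli
  exact hl2 (by linear_combination mul_left_cancel₀ hs h6)

lemma C_scalar (A B C : Matrix (Fin 2) (Fin 2) ℂ) (hirr : ¬ IsReduciblePair A B)
    (hCA : C * A = A * C) (hCB : C * B = B * C) (hdetC : C.det = 1) :
    ∃ c : ℂ, c ^ 2 = 1 ∧ C = c • 1 := by
  obtain ⟨α, v, hv, hev⟩ := exists_eig C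
  by_cases hsc : C = α • 1
  · refine ⟨α, ?_, hsc⟩
    rw [hsc] at hdetC
    simpa [Matrix.det_smul] using hdetC
  · exfalso
    set N : Matrix (Fin 2) (Fin 2) ℂ := C - α • 1 with hNdef
    have hN0 : N ≠ 0 := by
      intro h; exact hsc (by rw [← sub_eq_zero]; exact h)
    have hNv : N.mulVec v = 0 := by
      rw [hNdef, Matrix.sub_mulVec, hev, Matrix.smul_mulVec, Matrix.one_mulVec, sub_self]
    have key : ∀ M : Matrix (Fin 2) (Fin 2) ℂ, C * M = M * C → ∃ t : ℂ, M.mulVec v = t • v := by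
      intro M hcomm
      have hNM : N * M = M * N := by
        rw [hNdef, sub_mul, mul_sub, hcomm, smul_mul_assoc, mul_smul_comm, one_mul, mul_one]
      have hNMv : N.mulVec (M.mulVec v) = 0 := by
        rw [Matrix.mulVec_mulVec, hNM, ← Matrix.mulVec_mulVec, hNv, Matrix.mulVec_zero]
      exact kernel_line N hN0 v (M.mulVec v) hv hNv hNMv
    exact hirr ⟨v, hv, key A hCA, key B hCB⟩

lemma eig_smul (M : Matrix (Fin 2) (Fin 2) ℂ) (l c : ℂ) (v : Fin 2 → ℂ)
    (h : M.mulVec v = l • v) : M.mulVec (c • v) = l • (c • v) := by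
  rw [Matrix.mulVec_smul, h, smul_comm]

lemma conj_cols (M : Matrix (Fin 2) (Fin 2) ℂ) (α β : ℂ) (p q : Fin 2 → ℂ)
    (hp : M.mulVec p = α • p) (hq : M.mulVec q = β • q) :
    M * !![p 0, q 0; p 1, q 1] = !![p 0, q 0; p 1, q 1] * !![α, 0; 0, β] := by
  have hp0 := congrFun hp 0
  have hp1 := congrFun hp 1
  have hq0 := congrFun hq 0
  have hq1 := congrFun hq 1
  simp only [Matrix.mulVec, dotProduct, Fin.sum_univ_two, Pi.smul_apply,
    smul_eq_mul] at hp0 hp1 hq0 hq1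
  ext i j
  fin_cases i <;> fin_cases j <;>
    simp [Matrix.mul_apply, Fin.sum_univ_two] <;>
    first
      | linear_combination hp0
      | linear_combination hp1
      | linear_combination hq0
      | linear_combination hq1

theorem stmt5 (m n : ℕ) (hm : 0 < m) (hn : 0 < n)
    (A B : Matrix (Fin 2) (Fin 2) ℂ) (hA : A.det = 1) (hB : B.det = 1)
    (h : A ^ m = B ^ n) (hirr : ¬ IsReduciblePair A B) :
    ∃ (l mu r : ℂ) (P : Matrix (Fin 2) (Fin 2) ℂ),
      l ^ (2 * m) = 1 ∧ l ^ 2 ≠ 1 ∧ mu ^ 2 ≠ 1 ∧ l ^ m = mu ^ n ∧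
      r ≠ 0 ∧ r ≠ 1 ∧ P.det = 1 ∧
      A = P * Dmat l * P⁻¹ ∧ B = P * (Qmat r * Dmat mu * (Qmat r)⁻¹) * P⁻¹ := by
  obtain ⟨c, hc2, hC⟩ := C_scalar A B (A ^ m) hirr
    ((Commute.refl A).pow_left m).eq
    (by rw [h]; exact ((Commute.refl B).pow_left n).eq)
    (by rw [Matrix.det_pow, hA, one_pow])
  have hAm : A ^ m = c • 1 := hC
  have hBn : B ^ n = c • 1 := by rw [← h]; exact hC
  have hnsA : ¬ ∃ a : ℂ, A = a • (1 : Matrix (Fin 2) (Fin 2) ℂ) := by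
    rintro ⟨a, rfl⟩
    obtain ⟨b, z, hz, hez⟩ := exists_eig B
    exact hirr ⟨z, hz, ⟨a, by rw [Matrix.smul_mulVec, Matrix.one_mulVec]⟩, ⟨b, hez⟩⟩
  have hnsB : ¬ ∃ a : ℂ, B = a • (1 : Matrix (Fin 2) (Fin 2) ℂ) := by
    rintro ⟨a, rfl⟩
    obtain ⟨b, z, hz, hez⟩ := exists_eig A
    exact hirr ⟨z, hz, ⟨b, hez⟩, ⟨a, by rw [Matrix.smul_mulVec, Matrix.one_mulVec]⟩⟩
  obtain ⟨l, v, w, hl0, hlm, hl2, hv, hw, hAv, hAw, hvw⟩ :=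
    eig_structure A hA c hc2 m hm hAm hnsA
  obtain ⟨mu, x, y, hmu0, hmun, hmu2, hx, hy, hBx, hBy, hxy⟩ :=
    eig_structure B hB c hc2 n hn hBn hnsB
  -- decompose x and y in the basis v, w
  obtain ⟨a, ha_def⟩ : ∃ t : ℂ, t = (x 0 * w 1 - x 1 * w 0) / (v 0 * w 1 - v 1 * w 0) := ⟨_, rfl⟩
  obtain ⟨b, hb_def⟩ : ∃ t : ℂ, t = (v 0 * x 1 - v 1 * x 0) / (v 0 * w 1 - v 1 * w 0) := ⟨_, rfl⟩
  obtain ⟨c', hc'_def⟩ : ∃ t : ℂ, t = (y 0 * w 1 - y 1 * w 0) / (v 0 * w 1 - v 1 * w 0) := ⟨_, rfl⟩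
  obtain ⟨d', hd'_def⟩ : ∃ t : ℂ, t = (v 0 * y 1 - v 1 * y 0) / (v 0 * w 1 - v 1 * w 0) := ⟨_, rfl⟩
  have hx0 : a * v 0 + b * w 0 = x 0 := by
    rw [ha_def, hb_def, div_mul_eq_mul_div, div_mul_eq_mul_div, ← add_div, div_eq_iff hvw]; ring
  have hx1 : a * v 1 + b * w 1 = x 1 := by
    rw [ha_def, hb_def, div_mul_eq_mul_div, div_mul_eq_mul_div, ← add_div, div_eq_iff hvw]; ring
  have hy0 : c' * v 0 + d' * w 0 = y 0 := by
    rw [hc'_def, hd'_def, div_mul_eq_mul_div, div_mul_eq_mul_div, ← add_div, div_eq_iff hvw]; ring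
  have hy1 : c' * v 1 + d' * w 1 = y 1 := by
    rw [hc'_def, hd'_def, div_mul_eq_mul_div, div_mul_eq_mul_div, ← add_div, div_eq_iff hvw]; ring
  clear ha_def hb_def hc'_def hd'_def
  -- key: an eigenvector of B proportional to an eigenvector of A gives a contradiction
  have keyne : ∀ (ν : ℂ) (z : Fin 2 → ℂ), z ≠ 0 → B.mulVec z = ν • z →
      ∀ (g : ℂ) (u : Fin 2 → ℂ) (νA : ℂ), A.mulVec u = νA • u →
      (∀ i, z i = g * u i) → False := by
    intro ν z hz hBz g u νA hAu hzu
    have hg : g ≠ 0 := by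
      rintro rfl; apply hz; ext i; rw [hzu i]; simp
    have hu0 : u ≠ 0 := by
      rintro rfl; apply hz; ext i; rw [hzu i]; simp
    refine hirr ⟨u, hu0, ⟨νA, hAu⟩, ⟨ν, ?_⟩⟩
    have huz : u = g⁻¹ • z := by
      ext i; rw [Pi.smul_apply, hzu i, smul_eq_mul]; field_simp
    rw [huz]; exact eig_smul B ν g⁻¹ z hBz
  have ha : a ≠ 0 := by
    intro ha0
    exact keyne mu x hx hBx b w l⁻¹ hAw (by
      intro i; fin_cases i
      · show x 0 = b * w 0; rw [← hx0, ha0]; ring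
      · show x 1 = b * w 1; rw [← hx1, ha0]; ring)
  have hb : b ≠ 0 := by
    intro hb0
    exact keyne mu x hx hBx a v l hAv (by
      intro i; fin_cases i
      · show x 0 = a * v 0; rw [← hx0, hb0]; ring
      · show x 1 = a * v 1; rw [← hx1, hb0]; ring)
  have hc' : c' ≠ 0 := by
    intro h0
    exact keyne mu⁻¹ y hy hBy d' w l⁻¹ hAw (by
      intro i; fin_cases i
      · show y 0 = d' * w 0; rw [← hy0, h0]; ring
      · show y 1 = d' * w 1; rw [← hy1, h0]; ring)
  have hd' : d' ≠ 0 := by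
    intro h0
    exact keyne mu⁻¹ y hy hBy c' v l hAv (by
      intro i; fin_cases i
      · show y 0 = c' * v 0; rw [← hy0, h0]; ring
      · show y 1 = c' * v 1; rw [← hy1, h0]; ring)
  -- x and y are independent
  have hnecd : d' * a - c' * b ≠ 0 := by
    intro hcd
    have hyx : y = (c' / a) • x := by
      ext i; rw [Pi.smul_apply, smul_eq_mul]
      fin_cases i
      · show y 0 = c' / a * x 0
        rw [← hy0, ← hx0, eq_comm, div_mul_eq_mul_div, div_eq_iff ha]
        linear_combination -(w 0) * hcd
      · show y 1 = c' / a * x 1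
        rw [← hy1, ← hx1, eq_comm, div_mul_eq_mul_div, div_eq_iff ha]
        linear_combination -(w 1) * hcd
    have h7 := eig_smul B mu (c' / a) x hBx
    rw [← hyx] at h7
    rw [h7] at hBy
    have h8 : mu = mu⁻¹ := smul_cancel_vec _ _ y hy hBy
    apply hmu2
    have h9 : mu * mu = mu * mu⁻¹ := by rw [← h8]
    rw [mul_inv_cancel₀ hmu0] at h9
    linear_combination h9
  -- set up r
  obtain ⟨c₁, hc₁_def⟩ : ∃ t : ℂ, t = c' / a := ⟨_, rfl⟩
  obtain ⟨d₁, hd₁_def⟩ : ∃ t : ℂ, t = d' / b := ⟨_, rfl⟩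
  obtain ⟨e, he_def⟩ : ∃ t : ℂ, t = d₁ - c₁ := ⟨_, rfl⟩
  have he : e ≠ 0 := by
    rw [he_def, hd₁_def, hc₁_def, sub_ne_zero]
    intro h0
    apply hnecd
    field_simp at h0
    linear_combination h0
  obtain ⟨r, hr_def⟩ : ∃ t : ℂ, t = d₁ / e := ⟨_, rfl⟩
  have hd₁ : d₁ ≠ 0 := by rw [hd₁_def]; exact div_ne_zero hd' hb
  have hc₁ : c₁ ≠ 0 := by rw [hc₁_def]; exact div_ne_zero hc' ha
  have hr0 : r ≠ 0 := by rw [hr_def]; exact div_ne_zero hd₁ he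
  have he' : d₁ - c₁ ≠ 0 := by rw [← he_def]; exact he
  have hrm1 : r - 1 = c₁ / e := by
    rw [hr_def, he_def, div_sub_one he', sub_sub_cancel]
  have hr1 : r ≠ 1 := by
    intro h0
    rw [h0, sub_self] at hrm1
    exact hc₁ ((div_eq_zero_iff.1 hrm1.symm).resolve_right he)
  -- r-identities
  have hra : (r - 1) * a = e⁻¹ * c' := by
    rw [hrm1, hc₁_def]; field_simp
  have hrb : r * b = e⁻¹ * d' := by
    rw [hr_def, hd₁_def]; field_simp
  -- scaling factor s
  obtain ⟨s, hs2⟩ := IsAlgClosed.exists_pow_nat_eq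
    (k := ℂ) (a * b * (v 0 * w 1 - v 1 * w 0)) (n := 2) (by norm_num)
  have hsne : s ≠ 0 := by
    intro h0
    rw [h0, zero_pow (by norm_num : (2 : ℕ) ≠ 0)] at hs2
    rcases mul_eq_zero.1 hs2.symm with h' | h'
    · rcases mul_eq_zero.1 h' with h'' | h''
      · exact ha h''
      · exact hb h''
    · exact hvw h'
  -- the final matrices
  obtain ⟨V, hV_def⟩ : ∃ t : Fin 2 → ℂ, t = (s⁻¹ * a) • v := ⟨_, rfl⟩
  obtain ⟨W, hW_def⟩ : ∃ t : Fin 2 → ℂ, t = (s⁻¹ * b) • w := ⟨_, rfl⟩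
  obtain ⟨x₃, hx₃_def⟩ : ∃ t : Fin 2 → ℂ, t = s⁻¹ • x := ⟨_, rfl⟩
  obtain ⟨y₃, hy₃_def⟩ : ∃ t : Fin 2 → ℂ, t = (s⁻¹ * e⁻¹) • y := ⟨_, rfl⟩
  have hAV : A.mulVec V = l • V := by rw [hV_def]; exact eig_smul A l _ v hAv
  have hAW : A.mulVec W = l⁻¹ • W := by rw [hW_def]; exact eig_smul A l⁻¹ _ w hAw
  have hBx₃ : B.mulVec x₃ = mu • x₃ := by rw [hx₃_def]; exact eig_smul B mu _ x hBx
  have hBy₃ : B.mulVec y₃ = mu⁻¹ • y₃ := by rw [hy₃_def]; exact eig_smul B mu⁻¹ _ y hBy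
  obtain ⟨P, hP_def⟩ : ∃ t : Matrix (Fin 2) (Fin 2) ℂ, t = !![V 0, W 0; V 1, W 1] := ⟨_, rfl⟩
  obtain ⟨R, hR_def⟩ : ∃ t : Matrix (Fin 2) (Fin 2) ℂ, t = !![x₃ 0, y₃ 0; x₃ 1, y₃ 1] := ⟨_, rfl⟩
  have h1 : A * P = P * !![l, 0; 0, l⁻¹] := by
    rw [hP_def]; exact conj_cols A l l⁻¹ V W hAV hAW
  have h2 : B * R = R * !![mu, 0; 0, mu⁻¹] := by
    rw [hR_def]; exact conj_cols B mu mu⁻¹ x₃ y₃ hBx₃ hBy₃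
  -- P * Qmat r = R
  have hVW0 : V 0 = s⁻¹ * a * v 0 := by rw [hV_def]; simp
  have hVW1 : V 1 = s⁻¹ * a * v 1 := by rw [hV_def]; simp
  have hWW0 : W 0 = s⁻¹ * b * w 0 := by rw [hW_def]; simp
  have hWW1 : W 1 = s⁻¹ * b * w 1 := by rw [hW_def]; simp
  have hxx0 : x₃ 0 = s⁻¹ * x 0 := by rw [hx₃_def]; simp
  have hxx1 : x₃ 1 = s⁻¹ * x 1 := by rw [hx₃_def]; simp
  have hyy0 : y₃ 0 = s⁻¹ * e⁻¹ * y 0 := by rw [hy₃_def]; simp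
  have hyy1 : y₃ 1 = s⁻¹ * e⁻¹ * y 1 := by rw [hy₃_def]; simp
  have hPQ : P * Qmat r = R := by
    rw [hP_def, hR_def, Qmat, Matrix.mul_fin_two]
    have e00 : V 0 * 1 + W 0 * 1 = x₃ 0 := by
      rw [hVW0, hWW0, hxx0]; linear_combination s⁻¹ * hx0
    have e01 : V 0 * (r - 1) + W 0 * r = y₃ 0 := by
      rw [hVW0, hWW0, hyy0, ← hy0]
      linear_combination (s⁻¹ * v 0) * hra + (s⁻¹ * w 0) * hrb
    have e10 : V 1 * 1 + W 1 * 1 = x₃ 1 := by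
      rw [hVW1, hWW1, hxx1]; linear_combination s⁻¹ * hx1
    have e11 : V 1 * (r - 1) + W 1 * r = y₃ 1 := by
      rw [hVW1, hWW1, hyy1, ← hy1]
      linear_combination (s⁻¹ * v 1) * hra + (s⁻¹ * w 1) * hrb
    rw [e00, e01, e10, e11]
  -- determinants
  have hdetP : P.det = 1 := by
    rw [hP_def, Matrix.det_fin_two_of, hVW0, hVW1, hWW0, hWW1]
    have hss : s * s = a * b * (v 0 * w 1 - v 1 * w 0) := by
      rw [← hs2]; ring
    field_simp
    linear_combination -hss
  have hPU : IsUnit P.det := by rw [hdetP]; exact isUnit_one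
  have hQdet : (Qmat r).det = 1 := by
    rw [Qmat, Matrix.det_fin_two_of]; ring
  have hRU : IsUnit R.det := by
    rw [← hPQ, Matrix.det_mul, hdetP, hQdet, one_mul]; exact isUnit_one
  refine ⟨l, mu, r, P, ?_, hl2, hmu2, ?_, hr0, hr1, hdetP, ?_, ?_⟩
  · rw [mul_comm 2 m, pow_mul, hlm, hc2]
  · rw [hlm, hmun]
  · rw [show Dmat l = !![l, 0; 0, l⁻¹] from rfl, ← h1, mul_assoc,
      Matrix.mul_nonsing_inv P hPU, mul_one]
  · rw [show Dmat mu = !![mu, 0; 0, mu⁻¹] from rfl]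
    have hB2 : B = R * !![mu, 0; 0, mu⁻¹] * R⁻¹ := by
      rw [← h2, mul_assoc, Matrix.mul_nonsing_inv R hRU, mul_one]
    rw [hB2, ← hPQ, Matrix.mul_inv_rev]
    simp only [mul_assoc]
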